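/- Let N = p₁^{r₁} ⋯ p_f^{r_f} with mutually distinct primes p₁, …, p_f and set N_k = p_k^{r_k}. Then there exists a unitary matrix S and integers a₁, …, a_f such that S P_N S^{−1} = P_{N₁} ⊗ ⋯ ⊗ P_{N_f} and S Q_N S^{−1} = Q_{N₁}^{a₁} ⊗ ⋯ ⊗ Q_{N_f}^{a_f}; that is, the discrete Weyl system of composite dimension N is unitarily equivalent to the tensor product of the constituent Weyl systems acting in Hilbert spaces of the pairwise coprime prime-power dimensions p₁^{r₁}, …, p_f^{r_f}. -/

import Mathlib

open Matrix Complex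

/-- `ω_N = e^{2πi/N}`. -/
noncomputable def omegaN (N : ℕ) : ℂ := Complex.exp (2 * Real.pi * Complex.I / N)

/-- The generalized Pauli matrix `Q_N = diag(1, ω_N, …, ω_N^{N-1})`. -/
noncomputable def pauliQ (N : ℕ) : Matrix (Fin N) (Fin N) ℂ :=
  Matrix.diagonal fun ρ => omegaN N ^ (ρ : ℕ)

/-- The generalized Pauli matrix `P_N` with entries `(P_N)_{ρσ} = δ_{ρ+1,σ}` (indices mod N). -/
def pauliP (N : ℕ) : Matrix (Fin N) (Fin N) ℂ :=
  Matrix.of fun ρ σ => if ((ρ : ℕ) + 1) % N = (σ : ℕ) then 1 else 0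
lemma omegaN_pow_self (N : ℕ) (hN : 0 < N) : omegaN N ^ N = 1 := by
  rw [omegaN, ← Complex.exp_nat_mul]
  have hN0 : (N : ℂ) ≠ 0 := Nat.cast_ne_zero.mpr hN.ne'
  rw [show (N : ℂ) * (2 * Real.pi * Complex.I / N) = 2 * Real.pi * Complex.I by
    field_simp]
  exact Complex.exp_two_pi_mul_I

lemma omegaN_pow_mod (N : ℕ) (hN : 0 < N) (m : ℕ) : omegaN N ^ m = omegaN N ^ (m % N) := by
  conv_lhs => rw [← Nat.mod_add_div m N]
  rw [pow_add, pow_mul, omegaN_pow_self N hN, one_pow, mul_one]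

lemma omegaN_pow_div (N m d : ℕ) (hm : 0 < m) (hd : 0 < d) (h : d * m = N) :
    omegaN N ^ d = omegaN m := by
  have hN : 0 < N := h ▸ Nat.mul_pos hd hm
  rw [omegaN, omegaN, ← Complex.exp_nat_mul]
  congr 1
  have hN0 : (N : ℂ) ≠ 0 := Nat.cast_ne_zero.mpr hN.ne'
  have hm0 : (m : ℂ) ≠ 0 := Nat.cast_ne_zero.mpr hm.ne'
  have hdm : (d : ℂ) * m = N := by exact_mod_cast congrArg (Nat.cast : ℕ → ℂ) h
  field_simp
  linear_combination hdm

/-- `ZMod n ≃ Fin n` for `n ≠ 0`. -/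
def zmodFin (n : ℕ) [NeZero n] : ZMod n ≃ Fin n where
  toFun z := ⟨z.val, ZMod.val_lt z⟩
  invFun a := ((a : ℕ) : ZMod n)
  left_inv z := ZMod.natCast_zmod_val z
  right_inv a := by
    ext
    simp [ZMod.val_natCast, Nat.mod_eq_of_lt a.2]

@[simp] lemma zmodFin_coe (n : ℕ) [NeZero n] (z : ZMod n) : ((zmodFin n z : Fin n) : ℕ) = z.val := rfl
@[simp] lemma zmodFin_symm_apply (n : ℕ) [NeZero n] (a : Fin n) :
    (zmodFin n).symm a = ((a : ℕ) : ZMod n) := rfl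

section Perm
variable {m n : Type*} [Fintype m] [Fintype n] [DecidableEq m] [DecidableEq n] (σ : m ≃ n)

/-- Permutation matrix of an equivalence. -/
def permMat (σ : m ≃ n) : Matrix m n ℂ := Matrix.of fun x y => if y = σ x then 1 else 0

set_option linter.unusedSectionVars false

lemma star_ite (c : Prop) [Decidable c] : star (if c then (1:ℂ) else 0) = if c then 1 else 0 := by
  split <;> simp

lemma permMat_mul {k : Type*} (M : Matrix n k ℂ) :
    permMat σ * M = Matrix.of fun x y => M (σ x) y := by
  ext x y
  simp only [Matrix.mul_apply, permMat, Matrix.of_apply, ite_mul, one_mul, zero_mul]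
  rw [Finset.sum_ite_eq' Finset.univ (σ x)]
  simp

lemma mul_conjTranspose_permMat {k : Type*} [Fintype k] (M : Matrix k n ℂ) :
    M * (permMat σ)ᴴ = Matrix.of fun x y => M x (σ y) := by
  ext x y
  simp only [Matrix.mul_apply, Matrix.conjTranspose_apply, permMat, Matrix.of_apply,
    star_ite, mul_ite, mul_one, mul_zero]
  rw [Finset.sum_ite_eq' Finset.univ (σ y)]
  simp

lemma permMat_mul_conjTranspose : permMat σ * (permMat σ)ᴴ = 1 := by
  rw [mul_conjTranspose_permMat]
  ext x x'
  simp [permMat, Matrix.one_apply, Equiv.apply_eq_iff_eq, eq_comm]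

lemma conjTranspose_mul_permMat : (permMat σ)ᴴ * permMat σ = 1 := by
  ext y y'
  simp only [Matrix.mul_apply, Matrix.conjTranspose_apply, permMat, Matrix.of_apply,
    star_ite, mul_ite, mul_one, mul_zero, ite_mul, one_mul, zero_mul, Matrix.one_apply]
  have key : ∀ x : m, ((if y' = σ x then if y = σ x then (1:ℂ) else 0 else 0)) =
      if x = σ.symm y' then (if y = y' then 1 else 0) else 0 := by
    intro x
    by_cases h : x = σ.symm y'
    · subst h; simp [eq_comm]
    · have h2 : y' ≠ σ x := fun hyx => h (by simp [hyx])
      simp [h, h2]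
  calc (∑ x : m, if y' = σ x then (if y = σ x then (1:ℂ) else 0) else 0)
      = ∑ x : m, if x = σ.symm y' then (if y = y' then (1:ℂ) else 0) else 0 := by
        refine Finset.sum_congr rfl fun x _ => ?_
        exact key x
    _ = if y = y' then 1 else 0 := by rw [Finset.sum_ite_eq' Finset.univ (σ.symm y')]; simp

lemma permMat_conj (M : Matrix n n ℂ) :
    permMat σ * M * (permMat σ)ᴴ = Matrix.of fun x x' => M (σ x) (σ x') := by
  rw [permMat_mul, mul_conjTranspose_permMat]
  rfl

end Perm

theorem weyl_aux (f : ℕ) (Nk : Fin f → ℕ) (h2 : ∀ i, 2 ≤ Nk i)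
    (copr : Pairwise (Function.onFun Nat.Coprime Nk)) :
    ∃ (S : Matrix (∀ i, Fin (Nk i)) (Fin (∏ i, Nk i)) ℂ) (a : Fin f → ℤ),
      S * Sᴴ = 1 ∧ Sᴴ * S = 1 ∧
      S * pauliP (∏ i, Nk i) * Sᴴ =
        Matrix.of (fun x y : ∀ i, Fin (Nk i) => ∏ i, pauliP (Nk i) (x i) (y i)) ∧
      S * pauliQ (∏ i, Nk i) * Sᴴ =
        Matrix.of (fun x y : ∀ i, Fin (Nk i) => ∏ i, (pauliQ (Nk i) ^ (a i)) (x i) (y i)) := by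
  haveI inst : ∀ i, NeZero (Nk i) := fun i => ⟨by have := h2 i; omega⟩
  have hNkpos : ∀ i, 0 < Nk i := fun i => by have := h2 i; omega
  have hNpos : 0 < ∏ i, Nk i := Finset.prod_pos fun i _ => hNkpos i
  haveI : NeZero (∏ i, Nk i) := ⟨hNpos.ne'⟩
  set N := ∏ i, Nk i with hNdef
  let crt : ZMod N ≃+* ∀ i, ZMod (Nk i) := ZMod.prodEquivPi Nk copr
  let σ : (∀ i, Fin (Nk i)) ≃ Fin N :=
    (Equiv.piCongrRight fun i => (zmodFin (Nk i)).symm).trans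
      (crt.toEquiv.symm.trans (zmodFin N))
  -- the CRT compatibility of σ
  have hσ : ∀ (x : ∀ i, Fin (Nk i)) (i : Fin f),
      (((σ x : Fin N) : ℕ) : ZMod (Nk i)) = ((x i : ℕ) : ZMod (Nk i)) := by
    intro x i
    have h1 : (((σ x : Fin N) : ℕ) : ZMod N)
        = crt.symm (fun j => ((x j : ℕ) : ZMod (Nk j))) := by
      show (((zmodFin N (crt.symm _) : Fin N) : ℕ) : ZMod N) = _
      rw [zmodFin_coe, ZMod.natCast_zmod_val]
      congr 1
    have h2' := congrArg crt h1
    rw [RingEquiv.apply_symm_apply, map_natCast] at h2'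
    simpa using congrFun h2' i
  have hZeq : ∀ u w : ℕ, ((u : ZMod N) = (w : ZMod N)) ↔
      ∀ i, ((u : ZMod (Nk i)) = (w : ZMod (Nk i))) := by
    intro u w
    constructor
    · intro h i
      have h' := congrArg crt h
      rw [map_natCast, map_natCast] at h'
      simpa using congrFun h' i
    · intro h
      apply crt.injective
      rw [map_natCast, map_natCast]
      funext i
      simpa using h i
  -- the exponents
  set Mi : Fin f → ℕ := fun i => ∏ j ∈ Finset.univ.erase i, Nk j with hMidef
  have hMi_mul : ∀ i, Nk i * Mi i = N := fun i =>
    Finset.mul_prod_erase Finset.univ Nk (Finset.mem_univ i)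
  have hMi_pos : ∀ i, 0 < Mi i := fun i => Finset.prod_pos fun j _ => hNkpos j
  have hMi_cop : ∀ i, Nat.Coprime (Mi i) (Nk i) := by
    intro i
    refine Nat.Coprime.prod_left fun j hj => ?_
    exact copr (Finset.ne_of_mem_erase hj)
  set a : Fin f → ℕ := fun i => (((Mi i : ZMod (Nk i)))⁻¹).val with hadef
  -- character identity
  have hchar : ∀ x : ∀ i, Fin (Nk i),
      omegaN N ^ ((σ x : Fin N) : ℕ) = ∏ i, omegaN (Nk i) ^ ((x i : ℕ) * a i) := by
    intro x
    have step1 : ∀ i, omegaN (Nk i) ^ ((x i : ℕ) * a i)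
        = omegaN N ^ (Mi i * ((x i : ℕ) * a i)) := by
      intro i
      have hdiv := omegaN_pow_div N (Nk i) (Mi i) (hNkpos i) (hMi_pos i)
        (by rw [mul_comm]; exact hMi_mul i)
      rw [← hdiv, ← pow_mul]
    rw [Finset.prod_congr rfl fun i _ => step1 i, Finset.prod_pow_eq_pow_sum]
    rw [omegaN_pow_mod N hNpos ((σ x : Fin N) : ℕ), omegaN_pow_mod N hNpos (∑ i, _)]
    congr 1
    rw [← ZMod.natCast_eq_natCast_iff', hZeq]
    intro j
    rw [Nat.cast_sum, hσ x j]
    rw [Finset.sum_eq_single j]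
    · rw [Nat.cast_mul, Nat.cast_mul, ZMod.natCast_zmod_val,
        mul_comm ((x j : ℕ) : ZMod (Nk j)), ← mul_assoc,
        ZMod.coe_mul_inv_eq_one (Mi j) (hMi_cop j), one_mul]
    · intro i _ hij
      have hdvd : Nk j ∣ Mi i * ((x i : ℕ) * a i) :=
        Dvd.dvd.mul_right (Finset.dvd_prod_of_mem Nk
          (Finset.mem_erase.mpr ⟨hij.symm, Finset.mem_univ j⟩)) _
      exact (ZMod.natCast_eq_zero_iff _ _).mpr hdvd
    · intro h
      exact absurd (Finset.mem_univ j) h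
  refine ⟨permMat σ, fun i => (a i : ℤ), permMat_mul_conjTranspose σ,
    conjTranspose_mul_permMat σ, ?_, ?_⟩
  · rw [permMat_conj]
    ext x y
    simp only [Matrix.of_apply, pauliP]
    rw [Fintype.prod_boole]
    have main : ((((σ x : Fin N) : ℕ) + 1) % N = ((σ y : Fin N) : ℕ)) ↔
        ∀ i, (((x i : ℕ) + 1) % Nk i = ((y i) : ℕ)) := by
      rw [show ((((σ x : Fin N) : ℕ) + 1) % N = ((σ y : Fin N) : ℕ)) ↔
          (((((σ x : Fin N) : ℕ) + 1 : ℕ) : ZMod N) = (((σ y : Fin N) : ℕ) : ZMod N)) from by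
        rw [ZMod.natCast_eq_natCast_iff', Nat.mod_eq_of_lt (σ y).isLt]]
      rw [hZeq]
      apply forall_congr'
      intro i
      rw [Nat.cast_add, Nat.cast_one, hσ x i, hσ y i, ← Nat.cast_one, ← Nat.cast_add,
        ZMod.natCast_eq_natCast_iff', Nat.mod_eq_of_lt (y i).isLt]
    by_cases h : (((σ x : Fin N) : ℕ) + 1) % N = ((σ y : Fin N) : ℕ)
    · rw [if_pos h, if_pos (main.mp h)]
    · rw [if_neg h, if_neg (fun hc => h (main.mpr hc))]
  · rw [permMat_conj]
    ext x y
    simp only [Matrix.of_apply]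
    have hzp : ∀ i, (pauliQ (Nk i) ^ ((a i : ℤ))) = pauliQ (Nk i) ^ (a i) := fun i =>
      zpow_natCast _ _
    by_cases hxy : x = y
    · subst hxy
      rw [Finset.prod_congr rfl (fun i _ => by
        rw [hzp i, pauliQ, Matrix.diagonal_pow, Matrix.diagonal_apply_eq, Pi.pow_apply, ← pow_mul])]
      rw [pauliQ, Matrix.diagonal_apply_eq]
      exact hchar x
    · have h1 : σ x ≠ σ y := fun h => hxy (σ.injective h)
      rw [pauliQ, Matrix.diagonal_apply_ne _ h1]
      obtain ⟨i, hi⟩ := Function.ne_iff.mp hxy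
      refine (Finset.prod_eq_zero (Finset.mem_univ i) ?_).symm
      rw [hzp i, pauliQ, Matrix.diagonal_pow, Matrix.diagonal_apply_ne _ hi]


/-- Factorization of the discrete Weyl system into prime-power constituents:
if `N = p₁^{r₁} ⋯ p_f^{r_f}` with mutually distinct primes and `N_k = p_k^{r_k}`,
there are a unitary `S` and integers `a₁, …, a_f` with
`S P_N S⁻¹ = P_{N₁} ⊗ ⋯ ⊗ P_{N_f}` and `S Q_N S⁻¹ = Q_{N₁}^{a₁} ⊗ ⋯ ⊗ Q_{N_f}^{a_f}`,
the `f`-fold tensor (Kronecker) product being realized on the index type `Π i, Fin (Nk i)`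
by entrywise products. -/
theorem weyl_system_prime_power_factorization (f : ℕ) (p r : Fin f → ℕ)
    (hp : ∀ i, (p i).Prime) (hinj : Function.Injective p) (hr : ∀ i, 1 ≤ r i)
    (N : ℕ) (hN : N = ∏ i, p i ^ r i) (Nk : Fin f → ℕ) (hNk : ∀ i, Nk i = p i ^ r i) :
    ∃ (S : Matrix (∀ i, Fin (Nk i)) (Fin N) ℂ) (a : Fin f → ℤ),
      S * Sᴴ = 1 ∧ Sᴴ * S = 1 ∧
      S * pauliP N * Sᴴ =
        Matrix.of (fun x y : ∀ i, Fin (Nk i) => ∏ i, pauliP (Nk i) (x i) (y i)) ∧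
      S * pauliQ N * Sᴴ =
        Matrix.of (fun x y : ∀ i, Fin (Nk i) => ∏ i, (pauliQ (Nk i) ^ (a i)) (x i) (y i)) := by
  have h2 : ∀ i, 2 ≤ Nk i := by
    intro i
    rw [hNk i]
    have := (hp i).two_le
    calc 2 ≤ p i := this
      _ = p i ^ 1 := (pow_one _).symm
      _ ≤ p i ^ r i := Nat.pow_le_pow_right (by omega) (hr i)
  have copr : Pairwise (Function.onFun Nat.Coprime Nk) := by
    intro i j hij
    show Nat.Coprime (Nk i) (Nk j)
    rw [hNk i, hNk j]
    exact Nat.Coprime.pow _ _ ((Nat.coprime_primes (hp i) (hp j)).mpr fun h => hij (hinj h))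
  have hNprod : N = ∏ i, Nk i := by
    rw [hN]
    exact Finset.prod_congr rfl fun i _ => (hNk i).symm
  subst hNprod
  exact weyl_aux f Nk h2 copr
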